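/- Let (W,S) be a Coxeter system with based root system (Φ,Δ) in (V,B), X ⊆ ℝ₊, and define d_X(±β) = ±|{α ∈ N(s_β) : B(α,β) ∈ X}| for β ∈ Φ⁺. Then for any simple root α ∈ Δ and any β ∈ Φ: d_X(s_α(β)) = d_X(β) − 2 if B(α,β) ∈ X, d_X(s_α(β)) = d_X(β) if B(α,β) ∉ X ∪ (−X), and d_X(s_α(β)) = d_X(β) + 2 if B(α,β) ∈ −X. -/

import Mathlib

open scoped Classical

noncomputable section

namespace CoxGar

variable {I : Type*} {W : Type*} [Group W] {M : CoxeterMatrix I}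
variable {V : Type*} [AddCommGroup V] [Module ℝ V]

/-- The conic (nonnegative) hull of a set of vectors. -/
def posSpan (A : Set V) : Set V :=
  {v | ∃ (s : Finset V) (c : V → ℝ), ↑s ⊆ A ∧ (∀ x ∈ s, 0 ≤ c x) ∧ v = ∑ x ∈ s, c x • x}

/-- `l` is a reduced word. -/
def IsRed (cs : CoxeterSystem M W) (l : List I) : Prop :=
  cs.length (cs.wordProd l) = l.length

/-- Right weak order: `u` is a prefix of `v`, i.e. some reduced word for `u` is a prefix of
some reduced word for `v`. -/
def leR (cs : CoxeterSystem M W) (u v : W) : Prop :=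
  ∃ l₁ l₂ : List I, IsRed cs (l₁ ++ l₂) ∧ cs.wordProd (l₁ ++ l₂) = v ∧ cs.wordProd l₁ = u

/-- `u` is a suffix of `v`: some reduced word for `u` is a suffix of some reduced word for `v`. -/
def IsSuffixOf (cs : CoxeterSystem M W) (u v : W) : Prop :=
  ∃ l₁ l₂ : List I, IsRed cs (l₁ ++ l₂) ∧ cs.wordProd (l₁ ++ l₂) = v ∧ cs.wordProd l₂ = u

/-- `j` is the join (least upper bound) of `X` in right weak order. -/
def IsJoin (cs : CoxeterSystem M W) (X : Set W) (j : W) : Prop :=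
  (∀ x ∈ X, leR cs x j) ∧ ∀ g, (∀ x ∈ X, leR cs x g) → leR cs j g

/-- A Garside shadow in the Coxeter system `(W,S)`: a subset of `W` containing all simple
reflections, closed under existing joins in right weak order and under taking suffixes. -/
structure IsGarsideShadow (cs : CoxeterSystem M W) (A : Set W) : Prop where
  simple_mem : ∀ i : I, cs.simple i ∈ A
  join_mem : ∀ X ⊆ A, ∀ j : W, IsJoin cs X j → j ∈ A
  suffix_mem : ∀ w ∈ A, ∀ u : W, IsSuffixOf cs u w → u ∈ A

/-- Word length with respect to an arbitrary generating set of a group. -/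
def genLen (Sgen : Set W) (w : W) : ℕ :=
  sInf {n | ∃ l : List W, l.length = n ∧ (∀ x ∈ l, x ∈ Sgen) ∧ l.prod = w}

/-- A geometric representation of the Coxeter system `cs` on the quadratic space `(V,B)`:
a faithful representation sending the simple reflections to the `B`-reflections in a
simple system `α` (positively independent unit roots with the prescribed pairings). -/
structure GeomRep (cs : CoxeterSystem M W) (V : Type*) [AddCommGroup V] [Module ℝ V] where
  B : V →ₗ[ℝ] V →ₗ[ℝ] ℝ
  symm : ∀ u v : V, B u v = B v u
  α : I → V
  norm_one : ∀ i, B (α i) (α i) = 1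
  pairing_finite : ∀ i j, M i j ≠ 0 → B (α i) (α j) = - Real.cos (Real.pi / (M i j : ℝ))
  pairing_infinite : ∀ i j, M i j = 0 → B (α i) (α j) ≤ -1
  posIndep : ∀ f : I →₀ ℝ, (∀ i, 0 ≤ f i) → (f.sum fun i c => c • α i) = 0 → f = 0
  ρ : Representation ℝ W V
  faithful : Function.Injective ρ
  ρ_simple : ∀ (i : I) (v : V), ρ (cs.simple i) v = v - (2 * B (α i) v) • α i
  ρ_isom : ∀ (w : W) (u v : V), B (ρ w u) (ρ w v) = B u v

namespace GeomRep

variable {cs : CoxeterSystem M W} (gr : GeomRep cs V)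

/-- The root system `Φ`: the orbit of the simple roots. -/
def roots : Set V := {v | ∃ (w : W) (i : I), v = gr.ρ w (gr.α i)}

/-- The positive roots `Φ⁺`. -/
def posRoots : Set V := gr.roots ∩ posSpan (Set.range gr.α)

/-- The left inversion set `N(w) = Φ⁺ ∩ w(Φ⁻)`. -/
def invSet (w : W) : Set V := {v | v ∈ gr.posRoots ∧ gr.ρ w⁻¹ v ∈ -gr.posRoots}

/-- The reflection `s_β ∈ W` associated to a root `β` (the element of `W` acting on `V` as the
`B`-reflection along `β`). -/
def rfl' (b : V) : W :=
  Classical.epsilon fun t => ∀ v : V, gr.ρ t v = v - (2 * gr.B b v) • b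

/-- Dominance order: `a ⪯ b` iff every inversion set containing `b` contains `a`. -/
def dominates (a b : V) : Prop := ∀ w : W, b ∈ gr.invSet w → a ∈ gr.invSet w

/-- The set of positive roots strictly dominated by `b`. -/
def domSet (b : V) : Set V := {a | a ∈ gr.posRoots ∧ gr.dominates a b ∧ a ≠ b}

/-- The dominance depth (`∞`-depth) of a root. -/
def dpInf (b : V) : ℕ := (gr.domSet b).ncard

/-- The set `Σ_n` of `n`-small roots. -/
def smallRoots (n : ℕ) : Set V := {b | b ∈ gr.posRoots ∧ gr.dpInf b ≤ n}

/-- `w` is `n`-low: its inversion set is the set of roots in the conic hull of its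
`n`-small inversion set. -/
def IsLow (n : ℕ) (w : W) : Prop :=
  gr.invSet w = posSpan (gr.invSet w ∩ gr.smallRoots n) ∩ gr.roots

/-- The set `L_n(W)` of `n`-low elements. -/
def lowSet (n : ℕ) : Set W := {w | gr.IsLow n w}

/-- The base `N¹(w)` of the inversion set: positive roots `β` with `ℓ(s_β w) = ℓ(w) - 1`. -/
def base (w : W) : Set V :=
  {b | b ∈ gr.posRoots ∧ cs.length (gr.rfl' b * w) + 1 = cs.length w}

/-- The roots of a reflection subgroup `W'`. -/
def rootsOf (W' : Subgroup W) : Set V := {b | b ∈ gr.roots ∧ gr.rfl' b ∈ W'}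

/-- The canonical simple system of a reflection subgroup `W'`. -/
def canSimples (W' : Subgroup W) : Set V :=
  {a | a ∈ gr.posRoots ∧ gr.invSet (gr.rfl' a) ∩ gr.rootsOf W' = {a}}

/-- `{a,b}` is the canonical simple pair of a maximal dihedral reflection subgroup:
both are positive roots and the positive roots in the plane they span are exactly the
roots in their conic hull. -/
def IsMaxDihedralPair (a b : V) : Prop :=
  a ∈ gr.posRoots ∧ b ∈ gr.posRoots ∧ a ≠ b ∧
    (Submodule.span ℝ {a, b} : Set V) ∩ gr.posRoots = posSpan {a, b} ∩ gr.roots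

/-- A set of positive roots is bipodal if, whenever it contains a positive non-simple root of a
maximal dihedral reflection subgroup, it contains both canonical simple roots of that subgroup. -/
def Bipodal (A : Set V) : Prop :=
  ∀ a b : V, gr.IsMaxDihedralPair a b →
    (∃ c ∈ A, c ∈ posSpan {a, b} ∩ gr.roots ∧ c ≠ a ∧ c ≠ b) → a ∈ A ∧ b ∈ A

/-- `f_s(β)`: the root completing `α_s` to the canonical simple pair of the maximal dihedral
reflection subgroup containing `s` and `s_β`. -/
def fRoot (i : I) (b : V) : V :=
  Classical.epsilon fun c => c ∈ gr.posRoots ∧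
    (Submodule.span ℝ {gr.α i, b} : Set V) ∩ gr.posRoots = posSpan {gr.α i, c} ∩ gr.roots

/-- The `X`-length of a positive root. -/
def dXpos (X : Set ℝ) (b : V) : ℕ :=
  {a | a ∈ gr.invSet (gr.rfl' b) ∧ gr.B a b ∈ X}.ncard

/-- The `X`-length function `d_X` on the root system, with `d_X(-β) = -d_X(β)`. -/
def dX (X : Set ℝ) (b : V) : ℤ :=
  if b ∈ gr.posRoots then (gr.dXpos X b : ℤ) else -(gr.dXpos X (-b) : ℤ)

/-- Normalization of a vector to square length one. -/
def nzd (v : V) : V := (Real.sqrt (gr.B v v))⁻¹ • v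

/-- A root `a` spans an extreme ray of the cone `C`. -/
def IsExtremeRayRep (C : Set V) (a : V) : Prop :=
  a ∈ C ∧ a ≠ 0 ∧ ∀ u ∈ C, ∀ v ∈ C, a ∈ posSpan {u, v} →
    (∃ c : ℝ, 0 < c ∧ u = c • a) ∨ (∃ c : ℝ, 0 < c ∧ v = c • a)

end GeomRep

variable {cs : CoxeterSystem M W}

section Aux

open Finset

variable {cs : CoxeterSystem M W} (gr : GeomRep cs V)

namespace GeomRep

/-- posIndep in finset form. -/
theorem posIndep' (gr : GeomRep cs V) (t : Finset I) (d : I → ℝ) (hd : ∀ i ∈ t, 0 ≤ d i)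
    (hsum : ∑ i ∈ t, d i • gr.α i = 0) : ∀ i ∈ t, d i = 0 := by
  set d' : I → ℝ := fun i => if i ∈ t then d i else 0 with hd'
  have hsupp : ∀ i, d' i ≠ 0 → i ∈ t := by
    intro i hi
    by_contra h
    simp [hd', h] at hi
  set f : I →₀ ℝ := Finsupp.onFinset t d' hsupp with hf
  have hfsum : (f.sum fun i c => c • gr.α i) = ∑ i ∈ t, d i • gr.α i := by
    rw [Finsupp.sum]
    rw [Finset.sum_subset Finsupp.support_onFinset_subset]
    · apply Finset.sum_congr rfl
      intro i hi
      simp [hf, hd', hi]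
    · intro i _ hi
      rw [Finsupp.notMem_support_iff] at hi
      rw [hi, zero_smul]
  have h0 : f = 0 := by
    apply gr.posIndep
    · intro i
      rcases em (i ∈ t) with h | h
      · simpa [hf, hd', h] using hd i h
      · simp [hf, hd', h]
    · rw [hfsum, hsum]
  intro i hi
  have := congrArg (fun g => g i) h0
  simpa [hf, hd', hi] using this

theorem two_le_M (i j : I) (hij : i ≠ j) (h : M i j ≠ 0) : 2 ≤ M i j := by
  have h1 : M i j ≠ 1 := M.off_diagonal i j hij
  omega

theorem pairing_nonpos (i j : I) (hij : i ≠ j) : gr.B (gr.α i) (gr.α j) ≤ 0 := by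
  rcases em (M i j = 0) with h | h
  · linarith [gr.pairing_infinite i j h]
  · rw [gr.pairing_finite i j h]
    have h2 : (2 : ℝ) ≤ (M i j : ℝ) := by exact_mod_cast two_le_M (M := M) i j hij h
    have : (0:ℝ) ≤ Real.cos (Real.pi / (M i j : ℝ)) := by
      apply Real.cos_nonneg_of_mem_Icc
      constructor
      · have : 0 ≤ Real.pi / (M i j : ℝ) := by positivity
        linarith [Real.pi_pos]
      · rw [div_le_div_iff₀ (by linarith) (by norm_num)]
        nlinarith [Real.pi_pos]
    linarith

theorem alpha_injective : Function.Injective gr.α := by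
  intro i j hij
  by_contra h
  have h1 := gr.pairing_nonpos i j h
  rw [hij] at h1
  rw [gr.norm_one j] at h1
  norm_num at h1

/-- membership in posSpan of the simple roots, indexed form -/
theorem mem_posSpan_iff (v : V) :
    v ∈ posSpan (Set.range gr.α) ↔
      ∃ (t : Finset I) (d : I → ℝ), (∀ i ∈ t, 0 ≤ d i) ∧ v = ∑ i ∈ t, d i • gr.α i := by
  constructor
  · rintro ⟨s, c, hs, hc, rfl⟩
    classical
    refine ⟨s.preimage gr.α gr.alpha_injective.injOn, fun i => c (gr.α i), ?_, ?_⟩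
    · intro i hi
      exact hc _ (by simpa using hi)
    · rw [← Finset.sum_image (f := fun x => c x • x)
        (g := gr.α) (by intro a _ b _ h; exact gr.alpha_injective h)]
      apply Finset.sum_congr
      · apply Finset.coe_injective
        rw [Finset.coe_image, Finset.coe_preimage]
        exact (Set.image_preimage_eq_of_subset (by simpa using hs)).symm
      · intros; rfl
  · rintro ⟨t, d, hd, rfl⟩
    classical
    rcases t.eq_empty_or_nonempty with rfl | ⟨i0, hi0⟩
    · exact ⟨∅, 0, by simp, by simp, by simp⟩
    haveI : Nonempty I := ⟨i0⟩
    refine ⟨t.image gr.α, fun x => d (Function.invFun gr.α x), ?_, ?_, ?_⟩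
    · intro x hx
      rw [Finset.coe_image] at hx
      exact Set.image_subset_range _ _ hx
    · intro x hx
      simp only [Finset.mem_image] at hx
      obtain ⟨i, hi, rfl⟩ := hx
      show 0 ≤ d (Function.invFun gr.α (gr.α i))
      rw [Function.leftInverse_invFun gr.alpha_injective]
      exact hd i hi
    · rw [Finset.sum_image (by intro a _ b _ h; exact gr.alpha_injective h)]
      apply Finset.sum_congr rfl
      intro i hi
      show d i • gr.α i = d (Function.invFun gr.α (gr.α i)) • gr.α i
      rw [Function.leftInverse_invFun gr.alpha_injective]

end GeomRep

theorem zero_mem_posSpan (A : Set V) : (0 : V) ∈ posSpan A :=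
  ⟨∅, 0, by simp, by simp, by simp⟩

theorem mem_posSpan_self {A : Set V} {a : V} (ha : a ∈ A) : a ∈ posSpan A := by
  classical
  exact ⟨{a}, fun _ => 1, by simpa using ha, by simp, by simp⟩

theorem smul_mem_posSpan {A : Set V} {v : V} {k : ℝ} (hk : 0 ≤ k) (hv : v ∈ posSpan A) :
    k • v ∈ posSpan A := by
  obtain ⟨s, c, hs, hc, rfl⟩ := hv
  exact ⟨s, fun x => k * c x, hs, fun x hx => mul_nonneg hk (hc x hx),
    by rw [Finset.smul_sum]; apply Finset.sum_congr rfl; intros; rw [smul_smul]⟩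

theorem add_mem_posSpan {A : Set V} {u v : V} (hu : u ∈ posSpan A) (hv : v ∈ posSpan A) :
    u + v ∈ posSpan A := by
  classical
  obtain ⟨s₁, c₁, hs₁, hc₁, rfl⟩ := hu
  obtain ⟨s₂, c₂, hs₂, hc₂, rfl⟩ := hv
  refine ⟨s₁ ∪ s₂, (fun x => if x ∈ s₁ then c₁ x else 0) + fun x => if x ∈ s₂ then c₂ x else 0,
    ?_, ?_, ?_⟩
  · intro x hx
    rcases Finset.mem_union.1 (by simpa using hx) with h | h
    · exact hs₁ h
    · exact hs₂ h
  · intro x _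
    apply add_nonneg
    · show (0:ℝ) ≤ if x ∈ s₁ then c₁ x else 0
      split
      · exact hc₁ x ‹_›
      · exact le_rfl
    · show (0:ℝ) ≤ if x ∈ s₂ then c₂ x else 0
      split
      · exact hc₂ x ‹_›
      · exact le_rfl
  · simp only [Pi.add_apply, add_smul, Finset.sum_add_distrib]
    congr 1
    · rw [← Finset.sum_subset Finset.subset_union_left
        (by intro x _ hx; simp [hx])]
      apply Finset.sum_congr rfl; intro x hx; simp [hx]
    · rw [← Finset.sum_subset Finset.subset_union_right
        (by intro x _ hx; simp [hx])]
      apply Finset.sum_congr rfl; intro x hx; simp [hx]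

namespace GeomRep

theorem alpha_mem_posSpan (i : I) : gr.α i ∈ posSpan (Set.range gr.α) :=
  mem_posSpan_self ⟨i, rfl⟩

theorem eq_zero_of_mem_neg_mem {v : V} (h1 : v ∈ posSpan (Set.range gr.α))
    (h2 : -v ∈ posSpan (Set.range gr.α)) : v = 0 := by
  classical
  rw [gr.mem_posSpan_iff] at h1 h2
  obtain ⟨t₁, d₁, hd₁, he₁⟩ := h1
  obtain ⟨t₂, d₂, hd₂, he₂⟩ := h2
  set e : I → ℝ := fun j => (if j ∈ t₁ then d₁ j else 0) + (if j ∈ t₂ then d₂ j else 0) with he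
  have hsum : ∑ j ∈ t₁ ∪ t₂, e j • gr.α j = 0 := by
    have e1 : ∑ j ∈ t₁ ∪ t₂, (if j ∈ t₁ then d₁ j else 0) • gr.α j = v := by
      rw [← Finset.sum_subset Finset.subset_union_left (by intro x _ hx; simp [hx])]
      rw [he₁]; apply Finset.sum_congr rfl; intro x hx; simp [hx]
    have e2 : ∑ j ∈ t₁ ∪ t₂, (if j ∈ t₂ then d₂ j else 0) • gr.α j = -v := by
      rw [← Finset.sum_subset Finset.subset_union_right (by intro x _ hx; simp [hx])]
      rw [he₂]; apply Finset.sum_congr rfl; intro x hx; simp [hx]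
    simp only [he, add_smul, Finset.sum_add_distrib, e1, e2, add_neg_cancel]
  have hz := gr.posIndep' (t₁ ∪ t₂) e
    (fun j _ => add_nonneg (by split <;> simp_all [hd₁]) (by split <;> simp_all [hd₂])) hsum
  rw [he₁]
  apply Finset.sum_eq_zero
  intro j hj
  have := hz j (Finset.mem_union_left _ hj)
  have h1 : (0:ℝ) ≤ if j ∈ t₁ then d₁ j else 0 := by split <;> simp_all [hd₁]
  have h2 : (0:ℝ) ≤ if j ∈ t₂ then d₂ j else 0 := by split <;> simp_all [hd₂]
  have : d₁ j = 0 := by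
    have : (if j ∈ t₁ then d₁ j else 0) = 0 := by simp only [he] at this; linarith
    simpa [hj] using this
  rw [this, zero_smul]

/-- Core lemma: if a sum of two elements of the positive cone is a multiple of a simple root,
then each summand is a nonnegative multiple of that simple root. -/
theorem core (i : I) {u v : V} {r : ℝ} (hu : u ∈ posSpan (Set.range gr.α))
    (hv : v ∈ posSpan (Set.range gr.α)) (huv : u + v = r • gr.α i) :
    ∃ k : ℝ, 0 ≤ k ∧ u = k • gr.α i := by
  classical
  rw [gr.mem_posSpan_iff] at hu hv
  obtain ⟨t₁, d₁, hd₁, he₁⟩ := hu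
  obtain ⟨t₂, d₂, hd₂, he₂⟩ := hv
  set t : Finset I := insert i (t₁ ∪ t₂) with ht
  set d₁' : I → ℝ := fun j => if j ∈ t₁ then d₁ j else 0 with hd₁'
  set d₂' : I → ℝ := fun j => if j ∈ t₂ then d₂ j else 0 with hd₂'
  set e : I → ℝ := fun j => d₁' j + d₂' j with he
  have hd₁'nn : ∀ j, 0 ≤ d₁' j := fun j => by simp only [hd₁']; split <;> simp_all [hd₁]
  have hd₂'nn : ∀ j, 0 ≤ d₂' j := fun j => by simp only [hd₂']; split <;> simp_all [hd₂]
  have henn : ∀ j, 0 ≤ e j := fun j => add_nonneg (hd₁'nn j) (hd₂'nn j)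
  have hsub₁ : t₁ ⊆ t := fun x hx => Finset.mem_insert_of_mem (Finset.mem_union_left _ hx)
  have hsub₂ : t₂ ⊆ t := fun x hx => Finset.mem_insert_of_mem (Finset.mem_union_right _ hx)
  have hit : i ∈ t := Finset.mem_insert_self i _
  have e1 : ∑ j ∈ t, d₁' j • gr.α j = u := by
    rw [← Finset.sum_subset hsub₁ (by intro x _ hx; simp [hd₁', hx])]
    rw [he₁]; apply Finset.sum_congr rfl; intro x hx; simp [hd₁', hx]
  have e2 : ∑ j ∈ t, d₂' j • gr.α j = v := by
    rw [← Finset.sum_subset hsub₂ (by intro x _ hx; simp [hd₂', hx])]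
    rw [he₂]; apply Finset.sum_congr rfl; intro x hx; simp [hd₂', hx]
  have hsum : ∑ j ∈ t, e j • gr.α j = r • gr.α i := by
    simp only [he, add_smul, Finset.sum_add_distrib, e1, e2, huv]
  rcases le_or_gt r (e i) with hr | hr
  · -- r ≤ e i : subtract r at i and use positive independence
    set g : I → ℝ := fun j => if j = i then e j - r else e j with hg
    have hgsum : ∑ j ∈ t, g j • gr.α j = 0 := by
      have s2 : ∑ j ∈ t.erase i, e j • gr.α j + e i • gr.α i = r • gr.α i := by
        rw [Finset.sum_erase_add _ _ hit]; exact hsum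
      have s1 : ∑ j ∈ t, g j • gr.α j
          = ∑ j ∈ t.erase i, e j • gr.α j + (e i - r) • gr.α i := by
        rw [← Finset.sum_erase_add _ _ hit]
        congr 1
        · apply Finset.sum_congr rfl
          intro j hj
          simp [hg, Finset.ne_of_mem_erase hj]
        · simp [hg]
      rw [s1]
      linear_combination (norm := module) s2
    have hz := gr.posIndep' t g
      (fun j _ => by
        show (0:ℝ) ≤ if j = i then e j - r else e j
        split
        · rename_i hcase; subst hcase; linarith
        · exact henn j) hgsum
    have hkey : ∀ j ∈ t, j ≠ i → d₁' j = 0 := by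
      intro j hj hji
      have hgj := hz j hj
      simp only [hg, if_neg hji, he] at hgj
      have h1 := hd₁'nn j
      have h2 := hd₂'nn j
      linarith
    refine ⟨d₁' i, hd₁'nn i, ?_⟩
    rw [← e1]
    rw [← Finset.sum_erase_add _ _ hit]
    rw [Finset.sum_eq_zero (fun j hj => by
      rw [hkey j (Finset.mem_of_mem_erase hj) (Finset.ne_of_mem_erase hj), zero_smul])]
    rw [zero_add]
  · -- e i < r : contradiction via B (α i)
    exfalso
    have hsum' : (r - e i) • gr.α i = ∑ j ∈ t.erase i, e j • gr.α j := by
      have s2 : ∑ j ∈ t.erase i, e j • gr.α j + e i • gr.α i = r • gr.α i := by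
        rw [Finset.sum_erase_add _ _ hit]; exact hsum
      linear_combination (norm := module) - s2
    have hB := congrArg (fun x => gr.B (gr.α i) x) hsum'
    simp only [map_smul, map_sum, gr.norm_one i, smul_eq_mul, mul_one] at hB
    have hle : ∑ j ∈ t.erase i, e j * gr.B (gr.α i) (gr.α j) ≤ 0 := by
      apply Finset.sum_nonpos
      intro j hj
      have hji : j ≠ i := Finset.ne_of_mem_erase hj
      exact mul_nonpos_of_nonneg_of_nonpos (henn j) (gr.pairing_nonpos i j (Ne.symm hji))
    rw [← hB] at hle
    linarith

theorem rho_mul (w w' : W) (v : V) : gr.ρ (w * w') v = gr.ρ w (gr.ρ w' v) := by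
  rw [map_mul]; rfl

theorem rho_one (v : V) : gr.ρ (1 : W) v = v := by
  rw [map_one]; rfl

theorem rho_inv_apply (w : W) (v : V) : gr.ρ w⁻¹ (gr.ρ w v) = v := by
  rw [← gr.rho_mul, inv_mul_cancel, gr.rho_one]

theorem rho_apply_inv (w : W) (v : V) : gr.ρ w (gr.ρ w⁻¹ v) = v := by
  rw [← gr.rho_mul, mul_inv_cancel, gr.rho_one]

theorem rho_injective (w : W) : Function.Injective (gr.ρ w) := by
  intro u v huv
  have := congrArg (gr.ρ w⁻¹) huv
  rwa [gr.rho_inv_apply, gr.rho_inv_apply] at this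

theorem alpha_mem_roots (i : I) : gr.α i ∈ gr.roots :=
  ⟨1, i, (gr.rho_one _).symm⟩

theorem rho_mem_roots {b : V} (hb : b ∈ gr.roots) (w : W) : gr.ρ w b ∈ gr.roots := by
  obtain ⟨w', i, rfl⟩ := hb
  exact ⟨w * w', i, (gr.rho_mul _ _ _).symm⟩

theorem root_norm {b : V} (hb : b ∈ gr.roots) : gr.B b b = 1 := by
  obtain ⟨w, i, rfl⟩ := hb
  rw [gr.ρ_isom, gr.norm_one]

theorem root_ne_zero {b : V} (hb : b ∈ gr.roots) : b ≠ 0 := by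
  intro h
  have := gr.root_norm hb
  rw [h] at this
  simp at this

theorem simple_alpha (i : I) : gr.ρ (cs.simple i) (gr.α i) = -gr.α i := by
  rw [gr.ρ_simple, gr.norm_one]
  module

theorem neg_mem_roots {b : V} (hb : b ∈ gr.roots) : -b ∈ gr.roots := by
  obtain ⟨w, i, rfl⟩ := hb
  refine ⟨w * cs.simple i, i, ?_⟩
  rw [gr.rho_mul, gr.simple_alpha, map_neg]

theorem simple_invol (i : I) (v : V) : gr.ρ (cs.simple i) (gr.ρ (cs.simple i) v) = v := by
  rw [gr.ρ_simple, gr.ρ_simple]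
  simp only [map_sub, map_smul, gr.norm_one i, smul_eq_mul]
  module

theorem simple_inv (i : I) (v : V) : gr.ρ (cs.simple i)⁻¹ v = gr.ρ (cs.simple i) v := by
  rw [CoxeterSystem.inv_simple]

theorem alpha_mem_posRoots (i : I) : gr.α i ∈ gr.posRoots :=
  ⟨gr.alpha_mem_roots i, gr.alpha_mem_posSpan i⟩

theorem not_both_pos {v : V} (hv : v ≠ 0) (h1 : v ∈ posSpan (Set.range gr.α)) :
    -v ∉ posSpan (Set.range gr.α) :=
  fun h2 => hv (gr.eq_zero_of_mem_neg_mem h1 h2)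

theorem neg_alpha_not_mem (i : I) : -gr.α i ∉ posSpan (Set.range gr.α) :=
  gr.not_both_pos (gr.root_ne_zero (gr.alpha_mem_roots i)) (gr.alpha_mem_posSpan i)

/-- If a positive root is sent by a simple reflection into the negative cone,
it is the corresponding simple root. -/
theorem eq_alpha_of_reflect_neg {i : I} {b : V} (hb : b ∈ gr.posRoots)
    (h : -(gr.ρ (cs.simple i) b) ∈ posSpan (Set.range gr.α)) : b = gr.α i := by
  obtain ⟨hbr, hbp⟩ := hb
  have hrefl : gr.ρ (cs.simple i) b = b - (2 * gr.B (gr.α i) b) • gr.α i := gr.ρ_simple i b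
  have hsum : b + -(gr.ρ (cs.simple i) b) = (2 * gr.B (gr.α i) b) • gr.α i := by
    rw [hrefl]; module
  obtain ⟨k, hk, hbk⟩ := gr.core i hbp h hsum
  have hnorm := gr.root_norm hbr
  rw [hbk] at hnorm
  simp only [map_smul, LinearMap.smul_apply, smul_eq_mul, gr.norm_one i] at hnorm
  have : k = 1 := by nlinarith
  rw [hbk, this, one_smul]

end GeomRep

section Combinatorial

open CoxeterSystem List

/-- Greedy right-peeling of letters `i, j` from `w`. -/
theorem peel (i j : I) : ∀ (n : ℕ) (w : W), cs.length w = n →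
    ∃ (u : W) (l : List I), (∀ x ∈ l, x = i ∨ x = j) ∧ w = u * cs.wordProd l ∧
      cs.length w = cs.length u + l.length ∧
      ¬cs.IsRightDescent u i ∧ ¬cs.IsRightDescent u j := by
  intro n
  induction n using Nat.strong_induction_on with
  | _ n IH =>
    intro w hw
    by_cases hdi : cs.IsRightDescent w i
    · have hlt : cs.length (w * cs.simple i) < n := hw ▸ hdi
      obtain ⟨u, l, hl, hprod, hlen, hui, huj⟩ :=
        IH _ hlt (w * cs.simple i) rfl
      refine ⟨u, l ++ [i], ?_, ?_, ?_, hui, huj⟩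
      · intro x hx
        rcases List.mem_append.1 hx with h | h
        · exact hl x h
        · left; simpa using h
      · rw [cs.wordProd_append, cs.wordProd_singleton, ← mul_assoc, ← hprod]
        simp
      · have := cs.length_mul_simple w i
        unfold CoxeterSystem.IsRightDescent at hdi
        simp only [List.length_append, List.length_singleton]
        omega
    · by_cases hdj : cs.IsRightDescent w j
      · have hlt : cs.length (w * cs.simple j) < n := hw ▸ hdj
        obtain ⟨u, l, hl, hprod, hlen, hui, huj⟩ :=
          IH _ hlt (w * cs.simple j) rfl
        refine ⟨u, l ++ [j], ?_, ?_, ?_, hui, huj⟩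
        · intro x hx
          rcases List.mem_append.1 hx with h | h
          · exact hl x h
          · right; simpa using h
        · rw [cs.wordProd_append, cs.wordProd_singleton, ← mul_assoc, ← hprod]
          simp
        · have := cs.length_mul_simple w j
          unfold CoxeterSystem.IsRightDescent at hdj
          simp only [List.length_append, List.length_singleton]
          omega
      · exact ⟨w, [], by simp, by simp, by simp, hdi, hdj⟩

/-- A reduced word has no two adjacent equal letters. -/
theorem chain_ne_of_reduced : ∀ (l : List I), cs.length (cs.wordProd l) = l.length →
    l.Chain' (· ≠ ·) := by
  intro l
  induction l with
  | nil => exact fun _ => List.isChain_nil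
  | cons a t IH =>
    intro hred
    rw [List.Chain', List.isChain_cons]
    constructor
    · intro h hh
      rcases t with _ | ⟨b, t'⟩
      · simp at hh
      · simp only [List.head?_cons, Option.mem_def, Option.some.injEq] at hh
        subst hh
        intro hab
        subst hab
        have : cs.wordProd (a :: a :: t') = cs.wordProd t' := by
          rw [cs.wordProd_cons, cs.wordProd_cons, ← mul_assoc]
          simp
        rw [this] at hred
        have := cs.length_wordProd_le t'
        simp only [List.length_cons] at hred
        omega
    · apply IH
      have h1 : cs.length (cs.wordProd (a :: t)) ≤ 1 + cs.length (cs.wordProd t) := by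
        rw [cs.wordProd_cons]
        have := cs.length_mul_le (cs.simple a) (cs.wordProd t)
        simpa [cs.length_simple] using this
      have h2 := cs.length_wordProd_le t
      simp only [List.length_cons] at hred
      omega

/-- A word in two letters with no adjacent repetitions is an alternating word. -/
theorem eq_alternatingWord_of_chain (i j : I) (hij : i ≠ j) :
    ∀ (l : List I), (∀ x ∈ l, x = i ∨ x = j) → l.Chain' (· ≠ ·) →
      ∀ x, l.getLast? = some x →
        l = CoxeterSystem.alternatingWord (if x = i then j else i) x l.length := by
  intro l
  induction l using List.reverseRecOn with
  | nil => intro _ _ x hx; simp at hx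
  | append_singleton t y IH =>
    intro hmem hchain x hx
    have hxy : y = x := by
      rw [List.getLast?_append] at hx
      · simpa using hx
    subst hxy
    by_cases htnil : t = []
    · subst htnil
      simp only [List.nil_append, List.length_cons, List.length_nil]
      rw [CoxeterSystem.alternatingWord_succ]
      simp [CoxeterSystem.alternatingWord]
    · obtain ⟨t', z, rfl⟩ : ∃ t' z, t = t' ++ [z] := by
        obtain ⟨t', z, h⟩ := t.eq_nil_or_concat.resolve_left htnil
        exact ⟨t', z, by simpa [List.concat_eq_append] using h⟩
      -- t = t' ++ [z], z ≠ y
      rw [List.Chain', List.isChain_append] at hchain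
      obtain ⟨hchain't, _, hlast⟩ := hchain
      have hz : (t' ++ [z]).getLast? = some z := by
        rw [List.getLast?_append] <;> simp
      have hzy : z ≠ y := by
        have := hlast z (by simpa using hz) y (by simp)
        exact this
      have hzmem : z = i ∨ z = j := hmem z (by simp)
      have hymem : y = i ∨ y = j := hmem y (by simp)
      have IH' := IH (fun a ha => hmem a (List.mem_append_left _ ha)) hchain't z hz
      have hswap : (if z = i then j else i) = y := by
        rcases hzmem with rfl | rfl
        · rw [if_pos rfl]
          exact (hymem.resolve_left (fun h => hzy h.symm)).symm
        · rw [if_neg (Ne.symm hij)]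
          exact (hymem.resolve_right (fun h => hzy h.symm)).symm
      have hswap2 : (if y = i then j else i) = z := by
        rcases hymem with rfl | rfl
        · rw [if_pos rfl]
          exact (hzmem.resolve_left (fun h => hzy h)).symm
        · rw [if_neg (Ne.symm hij)]
          exact (hzmem.resolve_right (fun h => hzy h)).symm
      rw [hswap] at IH'
      calc t' ++ [z] ++ [y]
          = (CoxeterSystem.alternatingWord y z (t' ++ [z]).length).concat y := by
            rw [← IH']; simp
        _ = CoxeterSystem.alternatingWord z y ((t' ++ [z]).length + 1) :=
            (CoxeterSystem.alternatingWord_succ z y _).symm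
        _ = CoxeterSystem.alternatingWord (if y = i then j else i) y (t' ++ [z] ++ [y]).length := by
            rw [hswap2]; simp

/-- Reduced alternating words have length at most `M i j`. -/
theorem alt_length_le (i j : I) (hM : M i j ≠ 0) {p : ℕ}
    (h : cs.length (cs.wordProd (CoxeterSystem.alternatingWord i j p)) = p) : p ≤ M i j := by
  by_contra hp
  push_neg at hp
  apply cs.not_isReduced_alternatingWord i j hM hp
  unfold CoxeterSystem.IsReduced
  rwa [CoxeterSystem.length_alternatingWord]

end Combinatorial

/-- Chebyshev-like sequence. -/
def chebS (c : ℝ) : ℕ → ℝ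
  | 0 => 0
  | 1 => 1
  | (n+2) => 2*c*chebS c (n+1) - chebS c n

theorem chebS_closed_form {m : ℕ} (hm : 2 ≤ m) :
    ∀ r, chebS (Real.cos (Real.pi / m)) r * Real.sin (Real.pi / m)
      = Real.sin (r * (Real.pi / m)) := by
  have hm0 : (0:ℝ) < m := by positivity
  intro r
  induction r using Nat.strong_induction_on with
  | _ r IH =>
    match r with
    | 0 => simp [chebS]
    | 1 => simp [chebS]
    | (n+2) =>
      have h1 := IH (n+1) (by omega)
      have h0 := IH n (by omega)
      show (2 * Real.cos (Real.pi / m) * chebS (Real.cos (Real.pi / m)) (n+1)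
        - chebS (Real.cos (Real.pi / m)) n) * Real.sin (Real.pi / m) = _
      have key : ∀ x t : ℝ, Real.sin (x + t) = 2 * Real.cos t * Real.sin x - Real.sin (x - t) := by
        intro x t
        rw [Real.sin_add, Real.sin_sub]
        ring
      have : ((n:ℝ)+2) * (Real.pi / m) = ((n:ℝ)+1) * (Real.pi / m) + Real.pi / m := by ring
      rw [(by push_cast; ring : ((n+2:ℕ):ℝ) * (Real.pi / m) = ((n:ℝ)+1) * (Real.pi / m) + Real.pi / m)]
      rw [key]
      rw [(by push_cast; ring : ((n:ℝ)+1) * (Real.pi / m) - Real.pi / m = (n:ℝ) * (Real.pi / m))]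
      push_cast at h1 h0 ⊢
      linear_combination 2 * Real.cos (Real.pi / m) * h1 - h0

theorem chebS_nonneg_of_le {m : ℕ} (hm : 2 ≤ m) {r : ℕ} (hr : r ≤ m) :
    0 ≤ chebS (Real.cos (Real.pi / m)) r := by
  have hm0 : (0:ℝ) < m := by positivity
  have hm2 : (2:ℝ) ≤ (m:ℝ) := by exact_mod_cast hm
  have hsin : 0 < Real.sin (Real.pi / m) := by
    apply Real.sin_pos_of_pos_of_lt_pi
    · positivity
    · have : Real.pi / (m:ℝ) ≤ Real.pi / 2 := by
        apply div_le_div_of_nonneg_left Real.pi_pos.le (by norm_num) hm2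
      linarith [Real.pi_pos]
  have h := chebS_closed_form hm r
  have hval : 0 ≤ Real.sin (r * (Real.pi / m)) := by
    apply Real.sin_nonneg_of_nonneg_of_le_pi
    · positivity
    · have h1 : (r:ℝ) * (Real.pi/m) ≤ (m:ℝ) * (Real.pi/m) := by
        apply mul_le_mul_of_nonneg_right _ (by positivity)
        exact_mod_cast hr
      have heq : (m:ℝ) * (Real.pi / m) = Real.pi := by field_simp
      linarith
  nlinarith

theorem chebS_nonneg_of_one_le {c : ℝ} (hc : 1 ≤ c) :
    ∀ r, 0 ≤ chebS c r ∧ chebS c r ≤ chebS c (r+1) := by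
  intro r
  induction r using Nat.strong_induction_on with
  | _ r IH =>
    match r with
    | 0 => simp [chebS]
    | 1 =>
      refine ⟨by norm_num [chebS], ?_⟩
      show (1:ℝ) ≤ 2*c*1 - 0
      linarith
    | (n+2) =>
      obtain ⟨h1, h2⟩ := IH (n+1) (by omega)
      obtain ⟨h0, h0'⟩ := IH n (by omega)
      have hkey : chebS c (n+1) ≤ 2*c*chebS c (n+1) - chebS c n := by
        nlinarith [mul_le_mul_of_nonneg_right hc h1]
      have hT0 : 0 ≤ 2*c*chebS c (n+1) - chebS c n := le_trans h1 hkey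
      constructor
      · exact hT0
      · show 2*c*chebS c (n+1) - chebS c n ≤ 2*c*(2*c*chebS c (n+1) - chebS c n) - chebS c (n+1)
        nlinarith [mul_nonneg (by linarith : (0:ℝ) ≤ 2*c - 2) hT0]

namespace GeomRep

/-- Coefficients of an alternating word applied to a simple root. -/
theorem alt_apply (i j : I) (hij : i ≠ j) :
    ∀ r : ℕ, gr.ρ (cs.wordProd (CoxeterSystem.alternatingWord i j r)) (gr.α i)
      = (if Even r
          then chebS (-gr.B (gr.α i) (gr.α j)) (r+1) • gr.α i
            + chebS (-gr.B (gr.α i) (gr.α j)) r • gr.α j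
          else chebS (-gr.B (gr.α i) (gr.α j)) r • gr.α i
            + chebS (-gr.B (gr.α i) (gr.α j)) (r+1) • gr.α j) := by
  set c : ℝ := -gr.B (gr.α i) (gr.α j) with hc
  have hsymm : gr.B (gr.α j) (gr.α i) = -c := by rw [hc, gr.symm]; ring
  intro r
  induction r with
  | zero =>
    simp only [CoxeterSystem.alternatingWord, cs.wordProd_nil, gr.rho_one]
    norm_num [chebS]
  | succ n IHn =>
    rw [CoxeterSystem.alternatingWord_succ', cs.wordProd_cons, gr.rho_mul, IHn]
    by_cases hn : Even n
    · have hn1 : ¬ Even (n+1) := by simp [Nat.even_add_one, hn]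
      rw [if_pos hn, if_pos hn, if_neg hn1]
      rw [gr.ρ_simple]
      simp only [map_add, map_smul, smul_eq_mul, gr.norm_one, hsymm]
      have : chebS c (n+2) = 2*c*chebS c (n+1) - chebS c n := rfl
      rw [this]
      module
    · have hn1 : Even (n+1) := Nat.even_add_one.2 hn
      rw [if_neg hn, if_neg hn, if_pos hn1]
      rw [gr.ρ_simple]
      simp only [map_add, map_smul, smul_eq_mul, gr.norm_one, hc]
      have : chebS c (n+2) = 2*c*chebS c (n+1) - chebS c n := rfl
      rw [hc] at this
      rw [this]
      module

/-- Key positivity: if `i` is not a right descent of `w` then `w · αᵢ` is in the positive cone. -/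
theorem pos_of_not_rightDescent :
    ∀ (n : ℕ) (w : W), cs.length w = n → ∀ i : I, ¬cs.IsRightDescent w i →
      gr.ρ w (gr.α i) ∈ posSpan (Set.range gr.α) := by
  intro n
  induction n using Nat.strong_induction_on with
  | _ n IH =>
    intro w hw i hdi
    by_cases hone : w = 1
    · subst hone
      rw [gr.rho_one]
      exact gr.alpha_mem_posSpan i
    obtain ⟨j, hdj⟩ := cs.exists_rightDescent_of_ne_one hone
    have hij : i ≠ j := fun h => hdi (h ▸ hdj)
    obtain ⟨u, l, hmem, hprod, hlen, hui, huj⟩ := peel i j (cs.length w) w rfl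
    have hlne : l ≠ [] := by
      rintro rfl
      simp only [cs.wordProd_nil, mul_one] at hprod
      exact huj (hprod ▸ hdj)
    have hlu : cs.length u < n := by
      rw [← hw, hlen]
      have : 0 < l.length := List.length_pos_iff.2 hlne
      omega
    -- w * s i is longer
    have hwsi : cs.length (w * cs.simple i) = cs.length w + 1 :=
      (cs.not_isRightDescent_iff).1 hdi
    -- l and l ++ [i] are reduced
    have hlred : cs.length (cs.wordProd l) = l.length := by
      have h1 : cs.length w ≤ cs.length u + cs.length (cs.wordProd l) := by
        rw [hprod]; exact cs.length_mul_le u (cs.wordProd l)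
      have h2 := cs.length_wordProd_le l
      omega
    have hlred' : cs.length (cs.wordProd (l ++ [i])) = l.length + 1 := by
      have heq : w * cs.simple i = u * cs.wordProd (l ++ [i]) := by
        rw [cs.wordProd_append, cs.wordProd_singleton, ← mul_assoc, ← hprod]
      have h1 : cs.length (w * cs.simple i) ≤ cs.length u + cs.length (cs.wordProd (l ++ [i])) := by
        rw [heq]; exact cs.length_mul_le _ _
      have h2 := cs.length_wordProd_le (l ++ [i])
      simp only [List.length_append, List.length_singleton] at h2
      omega
    -- identify l with an alternating word
    have hchain : (l ++ [i]).Chain' (· ≠ ·) :=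
      chain_ne_of_reduced (cs := cs) (l ++ [i]) (by rw [hlred']; simp)
    have hmem' : ∀ x ∈ l ++ [i], x = i ∨ x = j := by
      intro x hx
      rcases List.mem_append.1 hx with h | h
      · exact hmem x h
      · left; simpa using h
    have hlast : (l ++ [i]).getLast? = some i := by
      rw [List.getLast?_append] <;> simp
    have halt := eq_alternatingWord_of_chain i j hij (l ++ [i]) hmem' hchain i hlast
    rw [if_pos rfl] at halt
    simp only [List.length_append, List.length_singleton] at halt
    have halt' : l = CoxeterSystem.alternatingWord i j l.length := by
      have h2 : l ++ [i] = (CoxeterSystem.alternatingWord i j l.length).concat i := by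
        rw [← CoxeterSystem.alternatingWord_succ j i l.length]
        exact halt
      have := congrArg List.dropLast h2
      simpa [List.dropLast_concat] using this
    -- positivity of the Chebyshev coefficients
    set c : ℝ := -gr.B (gr.α i) (gr.α j) with hc
    have hSnn : ∀ r ≤ l.length + 1, 0 ≤ chebS c r := by
      intro r hr
      rcases em (M i j = 0) with hM | hM
      · have h1 : 1 ≤ c := by
          have := gr.pairing_infinite i j hM
          rw [hc]; linarith
        exact (chebS_nonneg_of_one_le h1 r).1
      · have hm2 : 2 ≤ M i j := two_le_M (M := M) i j hij hM
        have hcval : c = Real.cos (Real.pi / (M i j : ℕ)) := by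
          rw [hc, gr.pairing_finite i j hM]; ring
        have hweq : CoxeterSystem.alternatingWord j i (l.length + 1) = l ++ [i] := by
          rw [CoxeterSystem.alternatingWord_succ j i, ← halt']
          simp [List.concat_eq_append]
        have hple : l.length + 1 ≤ M i j := by
          rw [M.symmetric i j]
          apply alt_length_le (cs := cs) j i
            (fun h => hM (by rw [M.symmetric i j]; exact h))
          rw [hweq, hlred']
        rw [hcval]
        exact chebS_nonneg_of_le hm2 (le_trans hr hple)
    -- conclude
    have hu_i : gr.ρ u (gr.α i) ∈ posSpan (Set.range gr.α) := IH _ hlu u rfl i hui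
    have hu_j : gr.ρ u (gr.α j) ∈ posSpan (Set.range gr.α) := IH _ hlu u rfl j huj
    have hw_eq : gr.ρ w (gr.α i) = gr.ρ u (gr.ρ (cs.wordProd l) (gr.α i)) := by
      rw [hprod, gr.rho_mul]
    rw [hw_eq]
    nth_rewrite 1 [halt']
    rw [gr.alt_apply i j hij l.length]
    split
    · rw [map_add, map_smul, map_smul]
      exact add_mem_posSpan (smul_mem_posSpan (hSnn _ (by omega)) hu_i)
        (smul_mem_posSpan (hSnn _ (by omega)) hu_j)
    · rw [map_add, map_smul, map_smul]
      exact add_mem_posSpan (smul_mem_posSpan (hSnn _ (by omega)) hu_i)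
        (smul_mem_posSpan (hSnn _ (by omega)) hu_j)

/-- Every root is positive or negative. -/
theorem pos_or_neg {b : V} (hb : b ∈ gr.roots) : b ∈ gr.posRoots ∨ -b ∈ gr.posRoots := by
  obtain ⟨w, i, rfl⟩ := hb
  by_cases hd : cs.IsRightDescent w i
  · right
    have hnd : ¬ cs.IsRightDescent (w * cs.simple i) i := by
      unfold CoxeterSystem.IsRightDescent at *
      rw [CoxeterSystem.simple_mul_simple_cancel_right]
      omega
    have hpos := gr.pos_of_not_rightDescent _ (w * cs.simple i) rfl i hnd
    rw [gr.rho_mul, gr.simple_alpha, map_neg] at hpos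
    exact ⟨gr.neg_mem_roots ⟨w, i, rfl⟩, hpos⟩
  · exact Or.inl ⟨⟨w, i, rfl⟩, gr.pos_of_not_rightDescent _ w rfl i hd⟩

theorem not_neg_mem_of_pos {b : V} (hb : b ∈ gr.posRoots) : -b ∉ gr.posRoots := by
  rintro ⟨_, hneg⟩
  exact gr.not_both_pos (gr.root_ne_zero hb.1) hb.2 hneg

theorem reflect_mem_posRoots {i : I} {b : V} (hb : b ∈ gr.posRoots) (hne : b ≠ gr.α i) :
    gr.ρ (cs.simple i) b ∈ gr.posRoots := by
  have hroot := gr.rho_mem_roots hb.1 (cs.simple i)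
  rcases gr.pos_or_neg hroot with h | h
  · exact h
  · exact absurd (gr.eq_alpha_of_reflect_neg hb h.2) hne

theorem neg_alpha_not_mem_posRoots (i : I) : -gr.α i ∉ gr.posRoots :=
  gr.not_neg_mem_of_pos (gr.alpha_mem_posRoots i)

/-! ### The reflection associated to a root -/

theorem rfl'_spec {b : V} (hb : b ∈ gr.roots) :
    ∀ v, gr.ρ (gr.rfl' b) v = v - (2 * gr.B b v) • b := by
  apply Classical.epsilon_spec (p := fun t => ∀ v : V, gr.ρ t v = v - (2 * gr.B b v) • b)
  obtain ⟨w, i, rfl⟩ := hb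
  refine ⟨w * cs.simple i * w⁻¹, fun v => ?_⟩
  rw [gr.rho_mul, gr.rho_mul, gr.ρ_simple]
  have hBv : gr.B (gr.α i) (gr.ρ w⁻¹ v) = gr.B (gr.ρ w (gr.α i)) v := by
    conv_rhs => rw [← gr.rho_apply_inv w v]
    rw [gr.ρ_isom]
  rw [map_sub, map_smul, gr.rho_apply_inv, hBv]

theorem rfl'_unique {b : V} (hb : b ∈ gr.roots) {t : W}
    (ht : ∀ v, gr.ρ t v = v - (2 * gr.B b v) • b) : t = gr.rfl' b := by
  apply gr.faithful
  apply LinearMap.ext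
  intro v
  rw [ht v, gr.rfl'_spec hb v]

theorem rfl'_alpha (i : I) : gr.rfl' (gr.α i) = cs.simple i :=
  (gr.rfl'_unique (gr.alpha_mem_roots i) (fun v => gr.ρ_simple i v)).symm

theorem rfl'_conj {b : V} (hb : b ∈ gr.roots) (w : W) :
    gr.rfl' (gr.ρ w b) = w * gr.rfl' b * w⁻¹ := by
  symm
  apply gr.rfl'_unique (gr.rho_mem_roots hb w)
  intro v
  rw [gr.rho_mul, gr.rho_mul, gr.rfl'_spec hb]
  have hBv : gr.B b (gr.ρ w⁻¹ v) = gr.B (gr.ρ w b) v := by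
    conv_rhs => rw [← gr.rho_apply_inv w v]
    rw [gr.ρ_isom]
  rw [map_sub, map_smul, gr.rho_apply_inv, hBv]

theorem rfl'_invol {b : V} (hb : b ∈ gr.roots) (v : V) :
    gr.ρ (gr.rfl' b) (gr.ρ (gr.rfl' b) v) = v := by
  rw [gr.rfl'_spec hb, gr.rfl'_spec hb]
  simp only [map_sub, map_smul, smul_eq_mul, gr.root_norm hb]
  module

theorem rfl'_mul_self {b : V} (hb : b ∈ gr.roots) : gr.rfl' b * gr.rfl' b = 1 := by
  apply gr.faithful
  apply LinearMap.ext
  intro v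
  rw [map_mul, map_one]
  exact gr.rfl'_invol hb v

theorem rfl'_inv {b : V} (hb : b ∈ gr.roots) : (gr.rfl' b)⁻¹ = gr.rfl' b :=
  inv_eq_of_mul_eq_one_right (gr.rfl'_mul_self hb)

theorem rfl'_apply_self {b : V} (hb : b ∈ gr.roots) : gr.ρ (gr.rfl' b) b = -b := by
  rw [gr.rfl'_spec hb, gr.root_norm hb]
  module

/-! ### Inversion sets -/

theorem mem_invSet_iff {w : W} {v : V} :
    v ∈ gr.invSet w ↔ v ∈ gr.posRoots ∧ -(gr.ρ w⁻¹ v) ∈ gr.posRoots := by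
  unfold invSet
  rw [Set.mem_setOf_eq, Set.mem_neg]

theorem invSet_cons_subset (i : I) (w : W) :
    gr.invSet (cs.simple i * w) ⊆ insert (gr.α i) (gr.ρ (cs.simple i) '' gr.invSet w) := by
  intro γ hγ
  rw [gr.mem_invSet_iff] at hγ
  obtain ⟨hγp, hγn⟩ := hγ
  by_cases hne : γ = gr.α i
  · exact Set.mem_insert_iff.2 (Or.inl hne)
  · apply Set.mem_insert_iff.2
    right
    refine ⟨gr.ρ (cs.simple i) γ, ?_, gr.simple_invol i γ⟩
    rw [gr.mem_invSet_iff]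
    refine ⟨gr.reflect_mem_posRoots hγp hne, ?_⟩
    have heq : gr.ρ w⁻¹ (gr.ρ (cs.simple i) γ) = gr.ρ (cs.simple i * w)⁻¹ γ := by
      rw [← gr.rho_mul, mul_inv_rev, CoxeterSystem.inv_simple]
    rw [heq]
    exact hγn

theorem invSet_finite (w : W) : (gr.invSet w).Finite := by
  obtain ⟨l, rfl⟩ := cs.wordProd_surjective w
  induction l with
  | nil =>
    apply Set.Finite.subset (Set.finite_empty)
    intro v hv
    rw [cs.wordProd_nil] at hv
    rw [gr.mem_invSet_iff] at hv
    obtain ⟨h1, h2⟩ := hv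
    rw [inv_one, gr.rho_one] at h2
    exact absurd h2 (gr.not_neg_mem_of_pos h1)
  | cons a t IH =>
    rw [cs.wordProd_cons]
    apply Set.Finite.subset (Set.Finite.insert (gr.α a) (IH.image (gr.ρ (cs.simple a))))
    exact gr.invSet_cons_subset a (cs.wordProd t)

theorem invSet_simple (i : I) : gr.invSet (cs.simple i) = {gr.α i} := by
  ext γ
  rw [gr.mem_invSet_iff]
  constructor
  · rintro ⟨h1, h2⟩
    rw [CoxeterSystem.inv_simple] at h2
    exact gr.eq_alpha_of_reflect_neg h1 h2.2
  · rintro rfl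
    refine ⟨gr.alpha_mem_posRoots i, ?_⟩
    rw [CoxeterSystem.inv_simple, gr.simple_alpha, neg_neg]
    exact gr.alpha_mem_posRoots i

theorem mem_invSet_rfl'_self {b : V} (hb : b ∈ gr.posRoots) : b ∈ gr.invSet (gr.rfl' b) := by
  rw [gr.mem_invSet_iff]
  refine ⟨hb, ?_⟩
  rw [gr.rfl'_inv hb.1, gr.rfl'_apply_self hb.1, neg_neg]
  exact hb

/-! ### Counting lemmas for `dXpos` -/

theorem B_reflect_right (i : I) (a b : V) :
    gr.B (gr.ρ (cs.simple i) a) b = gr.B a (gr.ρ (cs.simple i) b) := by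
  conv_lhs => rw [← gr.simple_invol i b]
  rw [gr.ρ_isom]

theorem B_alpha_reflect (i : I) (b : V) :
    gr.B (gr.α i) (gr.ρ (cs.simple i) b) = - gr.B (gr.α i) b := by
  rw [← gr.B_reflect_right, gr.simple_alpha, map_neg, LinearMap.neg_apply]

/-- Case analysis data for reflecting a positive root `b ≠ αᵢ` by `sᵢ`. -/
theorem dXpos_case_C (hX : X ⊆ Set.Ioi 0) (i : I) {b : V} (hb : b ∈ gr.posRoots)
    (hbne : b ≠ gr.α i) (hc : gr.B (gr.α i) b ∈ -X) :
    gr.dXpos X (gr.ρ (cs.simple i) b) = gr.dXpos X b + 2 := by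
  classical
  have hcX : -gr.B (gr.α i) b ∈ X := by rwa [Set.mem_neg] at hc
  have hcneg : gr.B (gr.α i) b < 0 := by
    have := hX hcX
    rw [Set.mem_Ioi] at this
    linarith
  set c := gr.B (gr.α i) b with hcdef
  set b' := gr.ρ (cs.simple i) b with hb'def
  have hb' : b' ∈ gr.posRoots := gr.reflect_mem_posRoots hb hbne
  have hbr : b ∈ gr.roots := hb.1
  have hb'r : b' ∈ gr.roots := hb'.1
  have hBab : ∀ a : V, gr.B (gr.ρ (cs.simple i) a) b' = gr.B a b := fun a => gr.ρ_isom _ _ _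
  have hBab2 : ∀ a : V, gr.B (gr.ρ (cs.simple i) a) b = gr.B a b' := by
    intro a
    rw [gr.B_reflect_right, ← hb'def]
  have hsb' : gr.ρ (cs.simple i) b' = b := gr.simple_invol i b
  have ht' : ∀ v, gr.ρ (gr.rfl' b') v
      = gr.ρ (cs.simple i) (gr.ρ (gr.rfl' b) (gr.ρ (cs.simple i) v)) := by
    intro v
    rw [hb'def, gr.rfl'_conj hbr, gr.rho_mul, gr.rho_mul, CoxeterSystem.inv_simple]
  have hmemt : ∀ v : V, v ∈ gr.invSet (gr.rfl' b)
      ↔ v ∈ gr.posRoots ∧ -(gr.ρ (gr.rfl' b) v) ∈ gr.posRoots := by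
    intro v
    rw [gr.mem_invSet_iff, gr.rfl'_inv hbr]
  have hmemt' : ∀ v : V, v ∈ gr.invSet (gr.rfl' b')
      ↔ v ∈ gr.posRoots ∧ -(gr.ρ (gr.rfl' b') v) ∈ gr.posRoots := by
    intro v
    rw [gr.mem_invSet_iff, gr.rfl'_inv hb'r]
  have htai : gr.ρ (gr.rfl' b) (gr.α i) = gr.α i + (-(2*c)) • b := by
    rw [gr.rfl'_spec hbr, gr.symm b (gr.α i), ← hcdef]
    module
  have htai_root : gr.ρ (gr.rfl' b) (gr.α i) ∈ gr.roots :=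
    gr.rho_mem_roots (gr.alpha_mem_roots i) _
  have htai_pos : gr.ρ (gr.rfl' b) (gr.α i) ∈ gr.posRoots := by
    refine ⟨htai_root, ?_⟩
    rw [htai]
    exact add_mem_posSpan (gr.alpha_mem_posSpan i) (smul_mem_posSpan (by linarith) hb.2)
  have htai_ne : gr.ρ (gr.rfl' b) (gr.α i) ≠ gr.α i := by
    rw [htai]
    intro h
    have hz : (-(2*c)) • b = 0 := by
      have := h
      rw [add_comm] at this
      simpa using this
    rcases smul_eq_zero.1 hz with h' | h'
    · linarith
    · exact gr.root_ne_zero hbr h'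
  set g := gr.ρ (cs.simple i) (gr.ρ (gr.rfl' b) (gr.α i)) with hgdef
  have hg_pos : g ∈ gr.posRoots := gr.reflect_mem_posRoots htai_pos htai_ne
  -- ρ t' αᵢ = -g
  have hgt' : gr.ρ (gr.rfl' b') (gr.α i) = -g := by
    rw [ht', gr.simple_alpha, map_neg, map_neg, hgdef]
  -- ρ t' g = -αᵢ
  have hgt'2 : gr.ρ (gr.rfl' b') g = -(gr.α i) := by
    rw [ht', hgdef, gr.simple_invol, gr.rfl'_invol hbr, gr.simple_alpha]
  -- B (ρ t αᵢ) b = -c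
  have hBtai : gr.B (gr.ρ (gr.rfl' b) (gr.α i)) b = -c := by
    rw [htai]
    simp only [map_add, map_smul, LinearMap.add_apply, LinearMap.smul_apply, smul_eq_mul,
      gr.root_norm hbr]
    rw [← hcdef]
    ring
  have hset : {a | a ∈ gr.invSet (gr.rfl' b') ∧ gr.B a b' ∈ X}
      = insert (gr.α i) (insert g
          ((gr.ρ (cs.simple i)) '' {a | a ∈ gr.invSet (gr.rfl' b) ∧ gr.B a b ∈ X})) := by
    ext γ
    simp only [Set.mem_setOf_eq, Set.mem_insert_iff, Set.mem_image]
    constructor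
    · rintro ⟨hγinv, hγB⟩
      rw [hmemt'] at hγinv
      obtain ⟨hγpos, hγneg⟩ := hγinv
      by_cases h1 : γ = gr.α i
      · exact Or.inl h1
      by_cases h2 : γ = g
      · exact Or.inr (Or.inl h2)
      refine Or.inr (Or.inr ⟨gr.ρ (cs.simple i) γ, ⟨?_, ?_⟩, gr.simple_invol i γ⟩)
      · rw [hmemt]
        refine ⟨gr.reflect_mem_posRoots hγpos h1, ?_⟩
        have hδ : gr.ρ (gr.rfl' b) (gr.ρ (cs.simple i) γ)
            = gr.ρ (cs.simple i) (gr.ρ (gr.rfl' b') γ) := by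
          rw [ht', gr.simple_invol]
        rw [hδ]
        have hδne : -(gr.ρ (gr.rfl' b') γ) ≠ gr.α i := by
          intro h
          have : gr.ρ (gr.rfl' b') γ = -(gr.α i) := by
            rw [← h, neg_neg]
          have hγeq : γ = gr.ρ (gr.rfl' b') (-(gr.α i)) := by
            rw [← this, gr.rfl'_invol hb'r]
          rw [map_neg, hgt', neg_neg] at hγeq
          exact h2 hγeq
        have := gr.reflect_mem_posRoots hγneg hδne
        simpa only [map_neg] using this
      · rw [hBab2 γ]
        exact hγB
    · rintro (rfl | rfl | ⟨a, ⟨hainv, haB⟩, rfl⟩)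
      · constructor
        · rw [hmemt']
          refine ⟨gr.alpha_mem_posRoots i, ?_⟩
          rw [hgt', neg_neg]
          exact hg_pos
        · rw [hb'def, gr.B_alpha_reflect, ← hcdef]
          exact hcX
      · constructor
        · rw [hmemt']
          refine ⟨hg_pos, ?_⟩
          rw [hgt'2, neg_neg]
          exact gr.alpha_mem_posRoots i
        · rw [hgdef, hBab]
          rw [hBtai]
          exact hcX
      · constructor
        · rw [hmemt]  at hainv
          obtain ⟨hapos, haneg⟩ := hainv
          rw [hmemt']
          have hane : a ≠ gr.α i := by
            rintro rfl
            have := hX haB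
            rw [Set.mem_Ioi] at this
            rw [← hcdef] at this
            linarith
          refine ⟨gr.reflect_mem_posRoots hapos hane, ?_⟩
          have hδ : gr.ρ (gr.rfl' b') (gr.ρ (cs.simple i) a)
              = gr.ρ (cs.simple i) (gr.ρ (gr.rfl' b) a) := by
            rw [ht', gr.simple_invol]
          rw [hδ]
          have hδne : -(gr.ρ (gr.rfl' b) a) ≠ gr.α i := by
            intro h
            have h' : gr.ρ (gr.rfl' b) a = -(gr.α i) := by rw [← h, neg_neg]
            have : a = gr.ρ (gr.rfl' b) (-(gr.α i)) := by
              rw [← h', gr.rfl'_invol hbr]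
            rw [map_neg] at this
            have := this ▸ hapos
            exact gr.not_neg_mem_of_pos htai_pos this
          have := gr.reflect_mem_posRoots haneg hδne
          simpa only [map_neg] using this
        · rw [hBab a]
          exact haB
  have hfin : {a | a ∈ gr.invSet (gr.rfl' b) ∧ gr.B a b ∈ X}.Finite :=
    (gr.invSet_finite _).subset (fun a ha => ha.1)
  have himg_fin := hfin.image (gr.ρ (cs.simple i))
  have hα_ne_g : gr.α i ≠ g := by
    intro h
    have : gr.ρ (cs.simple i) (gr.α i) = gr.ρ (cs.simple i) g := congrArg _ h
    rw [gr.simple_alpha, hgdef, gr.simple_invol] at this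
    have := this ▸ htai_pos
    exact gr.neg_alpha_not_mem_posRoots i this
  have hα_ni_img : gr.α i ∉ (gr.ρ (cs.simple i)) '' {a | a ∈ gr.invSet (gr.rfl' b) ∧ gr.B a b ∈ X} := by
    rintro ⟨a, ⟨hainv, _⟩, ha⟩
    have : a = gr.ρ (cs.simple i) (gr.α i) := by
      rw [← ha, gr.simple_invol]
    rw [gr.simple_alpha] at this
    have hapos := ((hmemt a).1 hainv).1
    rw [this] at hapos
    exact gr.neg_alpha_not_mem_posRoots i hapos
  have hg_ni_img : g ∉ (gr.ρ (cs.simple i)) '' {a | a ∈ gr.invSet (gr.rfl' b) ∧ gr.B a b ∈ X} := by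
    rintro ⟨a, ⟨hainv, _⟩, ha⟩
    have haeq : a = gr.ρ (gr.rfl' b) (gr.α i) := by
      have := congrArg (gr.ρ (cs.simple i)) ha
      rw [gr.simple_invol, hgdef, gr.simple_invol] at this
      exact this
    have := ((hmemt a).1 hainv).2
    rw [haeq, gr.rfl'_invol hbr] at this
    exact gr.neg_alpha_not_mem_posRoots i this
  show {a | a ∈ gr.invSet (gr.rfl' b') ∧ gr.B a b' ∈ X}.ncard
      = {a | a ∈ gr.invSet (gr.rfl' b) ∧ gr.B a b ∈ X}.ncard + 2
  rw [hset]
  rw [Set.ncard_insert_of_notMem (by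
      simp only [Set.mem_insert_iff]
      push_neg
      exact ⟨hα_ne_g, hα_ni_img⟩) (himg_fin.insert g)]
  rw [Set.ncard_insert_of_notMem hg_ni_img himg_fin]
  rw [Set.ncard_image_of_injective _ (gr.rho_injective (cs.simple i))]

/-- Case analysis: pairing not in `X ∪ -X`. -/
theorem dXpos_case_B (hX : X ⊆ Set.Ioi 0) (i : I) {b : V} (hb : b ∈ gr.posRoots)
    (hbne : b ≠ gr.α i) (hc : gr.B (gr.α i) b ∉ X ∪ -X) :
    gr.dXpos X (gr.ρ (cs.simple i) b) = gr.dXpos X b := by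
  classical
  have hcX : gr.B (gr.α i) b ∉ X := fun h => hc (Or.inl h)
  have hcnX : -(gr.B (gr.α i) b) ∉ X := by
    intro h
    exact hc (Or.inr (by rwa [Set.mem_neg]))
  set c := gr.B (gr.α i) b with hcdef
  set b' := gr.ρ (cs.simple i) b with hb'def
  have hb' : b' ∈ gr.posRoots := gr.reflect_mem_posRoots hb hbne
  have hbr : b ∈ gr.roots := hb.1
  have hb'r : b' ∈ gr.roots := hb'.1
  have hBab : ∀ a : V, gr.B (gr.ρ (cs.simple i) a) b' = gr.B a b := fun a => gr.ρ_isom _ _ _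
  have hBab2 : ∀ a : V, gr.B (gr.ρ (cs.simple i) a) b = gr.B a b' := by
    intro a
    rw [gr.B_reflect_right, ← hb'def]
  have ht' : ∀ v, gr.ρ (gr.rfl' b') v
      = gr.ρ (cs.simple i) (gr.ρ (gr.rfl' b) (gr.ρ (cs.simple i) v)) := by
    intro v
    rw [hb'def, gr.rfl'_conj hbr, gr.rho_mul, gr.rho_mul, CoxeterSystem.inv_simple]
  have hmemt : ∀ v : V, v ∈ gr.invSet (gr.rfl' b)
      ↔ v ∈ gr.posRoots ∧ -(gr.ρ (gr.rfl' b) v) ∈ gr.posRoots := by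
    intro v
    rw [gr.mem_invSet_iff, gr.rfl'_inv hbr]
  have hmemt' : ∀ v : V, v ∈ gr.invSet (gr.rfl' b')
      ↔ v ∈ gr.posRoots ∧ -(gr.ρ (gr.rfl' b') v) ∈ gr.posRoots := by
    intro v
    rw [gr.mem_invSet_iff, gr.rfl'_inv hb'r]
  -- B (ρ t αᵢ) b = -c and B (ρ t' αᵢ) b' = c
  have htai : gr.ρ (gr.rfl' b) (gr.α i) = gr.α i + (-(2*c)) • b := by
    rw [gr.rfl'_spec hbr, gr.symm b (gr.α i), ← hcdef]
    module
  have hBtai : gr.B (gr.ρ (gr.rfl' b) (gr.α i)) b = -c := by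
    rw [htai]
    simp only [map_add, map_smul, LinearMap.add_apply, LinearMap.smul_apply, smul_eq_mul,
      gr.root_norm hbr]
    rw [← hcdef]
    ring
  have hset : {a | a ∈ gr.invSet (gr.rfl' b') ∧ gr.B a b' ∈ X}
      = (gr.ρ (cs.simple i)) '' {a | a ∈ gr.invSet (gr.rfl' b) ∧ gr.B a b ∈ X} := by
    ext γ
    simp only [Set.mem_setOf_eq, Set.mem_image]
    constructor
    · rintro ⟨hγinv, hγB⟩
      rw [hmemt'] at hγinv
      obtain ⟨hγpos, hγneg⟩ := hγinv
      have h1 : γ ≠ gr.α i := by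
        rintro rfl
        rw [hb'def, gr.B_alpha_reflect, ← hcdef] at hγB
        exact hcnX hγB
      refine ⟨gr.ρ (cs.simple i) γ, ⟨?_, ?_⟩, gr.simple_invol i γ⟩
      · rw [hmemt]
        refine ⟨gr.reflect_mem_posRoots hγpos h1, ?_⟩
        have hδ : gr.ρ (gr.rfl' b) (gr.ρ (cs.simple i) γ)
            = gr.ρ (cs.simple i) (gr.ρ (gr.rfl' b') γ) := by
          rw [ht', gr.simple_invol]
        rw [hδ]
        have hδne : -(gr.ρ (gr.rfl' b') γ) ≠ gr.α i := by
          intro h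
          have h' : gr.ρ (gr.rfl' b') γ = -(gr.α i) := by rw [← h, neg_neg]
          have hγeq : γ = gr.ρ (gr.rfl' b') (-(gr.α i)) := by
            rw [← h', gr.rfl'_invol hb'r]
          rw [map_neg] at hγeq
          -- then B γ b' = - B (ρ t' αᵢ) b' = ... = -c ∉ X, contradiction
          have hBγ : gr.B γ b' = -c := by
            rw [hγeq, map_neg, LinearMap.neg_apply, ht', gr.simple_alpha, map_neg, map_neg]
            rw [map_neg, LinearMap.neg_apply, neg_neg, hBab]
            exact hBtai
          rw [hBγ] at hγB
          exact hcnX hγB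
        have := gr.reflect_mem_posRoots hγneg hδne
        simpa only [map_neg] using this
      · rw [hBab2 γ]
        exact hγB
    · rintro ⟨a, ⟨hainv, haB⟩, rfl⟩
      constructor
      · rw [hmemt] at hainv
        obtain ⟨hapos, haneg⟩ := hainv
        have hane : a ≠ gr.α i := by
          rintro rfl
          rw [← hcdef] at haB
          exact hcX haB
        rw [hmemt']
        refine ⟨gr.reflect_mem_posRoots hapos hane, ?_⟩
        have hδ : gr.ρ (gr.rfl' b') (gr.ρ (cs.simple i) a)
            = gr.ρ (cs.simple i) (gr.ρ (gr.rfl' b) a) := by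
          rw [ht', gr.simple_invol]
        rw [hδ]
        have hδne : -(gr.ρ (gr.rfl' b) a) ≠ gr.α i := by
          intro h
          have h' : gr.ρ (gr.rfl' b) a = -(gr.α i) := by rw [← h, neg_neg]
          have : a = gr.ρ (gr.rfl' b) (-(gr.α i)) := by
            rw [← h', gr.rfl'_invol hbr]
          rw [map_neg] at this
          -- B a b = - B (ρ t αᵢ) b = c ∉ X
          have hBa : gr.B a b = c := by
            rw [this, map_neg, LinearMap.neg_apply, hBtai]
            ring
          rw [hBa] at haB
          exact hcX haB
        have := gr.reflect_mem_posRoots haneg hδne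
        simpa only [map_neg] using this
      · rw [hBab a]
        exact haB
  show {a | a ∈ gr.invSet (gr.rfl' b') ∧ gr.B a b' ∈ X}.ncard
      = {a | a ∈ gr.invSet (gr.rfl' b) ∧ gr.B a b ∈ X}.ncard
  rw [hset, Set.ncard_image_of_injective _ (gr.rho_injective (cs.simple i))]

theorem dXpos_case_A (hX : X ⊆ Set.Ioi 0) (i : I) {b : V} (hb : b ∈ gr.posRoots)
    (hbne : b ≠ gr.α i) (hc : gr.B (gr.α i) b ∈ X) :
    gr.dXpos X (gr.ρ (cs.simple i) b) + 2 = gr.dXpos X b := by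
  have hb' := gr.reflect_mem_posRoots hb hbne
  have hb'ne : gr.ρ (cs.simple i) b ≠ gr.α i := by
    intro h
    have h2 := congrArg (gr.ρ (cs.simple i)) h
    rw [gr.simple_invol, gr.simple_alpha] at h2
    rw [h2] at hb
    exact gr.neg_alpha_not_mem_posRoots i hb
  have hcneg : gr.B (gr.α i) (gr.ρ (cs.simple i) b) ∈ -X := by
    rw [gr.B_alpha_reflect, Set.mem_neg, neg_neg]
    exact hc
  have hkey := gr.dXpos_case_C hX i hb' hb'ne hcneg
  rw [gr.simple_invol] at hkey
  omega

theorem dX_rec_pos (X : Set ℝ) (hX : X ⊆ Set.Ioi 0) (i : I) {b : V} (hb : b ∈ gr.posRoots) :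
    (gr.B (gr.α i) b ∈ X → gr.dX X (gr.ρ (cs.simple i) b) = gr.dX X b - 2) ∧
      (gr.B (gr.α i) b ∉ X ∪ -X → gr.dX X (gr.ρ (cs.simple i) b) = gr.dX X b) ∧
      (gr.B (gr.α i) b ∈ -X → gr.dX X (gr.ρ (cs.simple i) b) = gr.dX X b + 2) := by
  classical
  by_cases hbα : b = gr.α i
  · subst hbα
    have hneg : -gr.α i ∉ gr.posRoots := gr.neg_alpha_not_mem_posRoots i
    have hpos : gr.α i ∈ gr.posRoots := gr.alpha_mem_posRoots i
    have hB1 : gr.B (gr.α i) (gr.α i) = 1 := gr.norm_one i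
    refine ⟨?_, ?_, ?_⟩
    · intro h1X
      rw [hB1] at h1X
      have hd : gr.dXpos X (gr.α i) = 1 := by
        show {a | a ∈ gr.invSet (gr.rfl' (gr.α i)) ∧ gr.B a (gr.α i) ∈ X}.ncard = 1
        rw [gr.rfl'_alpha, gr.invSet_simple]
        have hseq : {a | a ∈ ({gr.α i} : Set V) ∧ gr.B a (gr.α i) ∈ X} = {gr.α i} := by
          ext a
          simp only [Set.mem_setOf_eq, Set.mem_singleton_iff]
          exact ⟨fun h => h.1, fun h => ⟨h, by rw [h, hB1]; exact h1X⟩⟩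
        rw [hseq, Set.ncard_singleton]
      rw [gr.simple_alpha]
      unfold GeomRep.dX
      rw [if_neg hneg, if_pos hpos, neg_neg, hd]
      norm_num
    · intro hcO
      rw [hB1] at hcO
      have h1X : (1:ℝ) ∉ X := fun h => hcO (Or.inl h)
      have hd : gr.dXpos X (gr.α i) = 0 := by
        show {a | a ∈ gr.invSet (gr.rfl' (gr.α i)) ∧ gr.B a (gr.α i) ∈ X}.ncard = 0
        rw [gr.rfl'_alpha, gr.invSet_simple]
        have hseq : {a | a ∈ ({gr.α i} : Set V) ∧ gr.B a (gr.α i) ∈ X} = ∅ := by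
          ext a
          simp only [Set.mem_setOf_eq, Set.mem_singleton_iff, Set.mem_empty_iff_false,
            iff_false, not_and]
          rintro rfl
          rw [hB1]
          exact h1X
        rw [hseq, Set.ncard_empty]
      rw [gr.simple_alpha]
      unfold GeomRep.dX
      rw [if_neg hneg, if_pos hpos, neg_neg, hd]
      norm_num
    · intro hcnX
      rw [hB1] at hcnX
      rw [Set.mem_neg] at hcnX
      have := hX hcnX
      rw [Set.mem_Ioi] at this
      linarith
  · have hb' := gr.reflect_mem_posRoots hb hbα
    have hdb : gr.dX X b = (gr.dXpos X b : ℤ) := by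
      unfold GeomRep.dX
      rw [if_pos hb]
    have hdb' : gr.dX X (gr.ρ (cs.simple i) b) = (gr.dXpos X (gr.ρ (cs.simple i) b) : ℤ) := by
      unfold GeomRep.dX
      rw [if_pos hb']
    refine ⟨?_, ?_, ?_⟩
    · intro hc
      have := gr.dXpos_case_A hX i hb hbα hc
      rw [hdb, hdb']
      omega
    · intro hc
      have := gr.dXpos_case_B hX i hb hbα hc
      rw [hdb, hdb', this]
    · intro hc
      have := gr.dXpos_case_C hX i hb hbα hc
      rw [hdb, hdb', this]
      push_cast
      ring

theorem dX_neg_of_root (X : Set ℝ) {b : V} (hb : b ∈ gr.roots) :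
    gr.dX X (-b) = - gr.dX X b := by
  rcases gr.pos_or_neg hb with h | h
  · have h2 : -b ∉ gr.posRoots := gr.not_neg_mem_of_pos h
    unfold GeomRep.dX
    rw [if_neg h2, if_pos h, neg_neg]
  · have h2 : b ∉ gr.posRoots := fun hb' => gr.not_neg_mem_of_pos hb' h
    unfold GeomRep.dX
    rw [if_pos h, if_neg h2, neg_neg]

end GeomRep

end Aux


/-- Recursion for the `X`-length functions `d_X` on the root system under simple
reflections. -/
theorem dX_simple_recursion (gr : GeomRep cs V) (X : Set ℝ) (hX : X ⊆ Set.Ioi 0)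
    (i : I) (b : V) (hb : b ∈ gr.roots) :
    (gr.B (gr.α i) b ∈ X → gr.dX X (gr.ρ (cs.simple i) b) = gr.dX X b - 2) ∧
      (gr.B (gr.α i) b ∉ X ∪ -X → gr.dX X (gr.ρ (cs.simple i) b) = gr.dX X b) ∧
      (gr.B (gr.α i) b ∈ -X → gr.dX X (gr.ρ (cs.simple i) b) = gr.dX X b + 2) := by
  rcases gr.pos_or_neg hb with hpos | hneg
  · exact gr.dX_rec_pos X hX i hpos
  · have hrec := gr.dX_rec_pos X hX i hneg
    have hBneg : gr.B (gr.α i) (-b) = - gr.B (gr.α i) b := by rw [map_neg]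
    have hdXb : gr.dX X (-b) = - gr.dX X b := gr.dX_neg_of_root X hb
    have hsneg : gr.ρ (cs.simple i) (-b) = -(gr.ρ (cs.simple i) b) := map_neg _ _
    have hdXs : gr.dX X (-(gr.ρ (cs.simple i) b)) = - gr.dX X (gr.ρ (cs.simple i) b) :=
      gr.dX_neg_of_root X (gr.rho_mem_roots hb (cs.simple i))
    refine ⟨?_, ?_, ?_⟩
    · intro hcX
      have h1 : gr.B (gr.α i) (-b) ∈ -X := by
        rw [hBneg, Set.mem_neg, neg_neg]
        exact hcX
      have := hrec.2.2 h1
      rw [hsneg, hdXs, hdXb] at this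
      omega
    · intro hcO
      have h1 : gr.B (gr.α i) (-b) ∉ X ∪ -X := by
        rw [hBneg]
        intro h
        apply hcO
        rcases h with h | h
        · right
          rwa [Set.mem_neg]
        · left
          rw [Set.mem_neg, neg_neg] at h
          exact h
      have := hrec.2.1 h1
      rw [hsneg, hdXs, hdXb] at this
      omega
    · intro hcnX
      have h1 : gr.B (gr.α i) (-b) ∈ X := by
        rw [hBneg]
        rwa [Set.mem_neg] at hcnX
      have := hrec.1 h1
      rw [hsneg, hdXs, hdXb] at this
      omega

end CoxGar
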